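/- Let w : ℝ^d → [0,∞) be measurable with ∫ w < ∞, let β > 0, μ ∈ ℝ, and suppose V_min, V_max ∈ L^∞(ℝ^d) both satisfy the fixed point equation V(k) = ∫ w(k−k') /(exp(β(|k'|²/2 − V(k') − μ)) + 1) dk', with 0 ≤ V_min ≤ V_max pointwise. Set g_max(k) = 1/(exp(β(|k|²/2 − V_max(k) − μ)) + 1). Then ‖V_max − V_min‖_{L^∞} ≤ β · ‖w * g_max‖_{L^∞} · ‖V_max − V_min‖_{L^∞}. In particular, if β ‖w * g_max‖_{L^∞} < 1 then V_min = V_max. -/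

import Mathlib

open Real MeasureTheory

private lemma occ_nonneg (x : ℝ) : 0 ≤ 1 / (Real.exp x + 1) := by positivity

private lemma occ_le_one (x : ℝ) : 1 / (Real.exp x + 1) ≤ 1 := by
  rw [div_le_one (by positivity)]
  nlinarith [Real.exp_pos x]

private lemma occ_diff_le {a b : ℝ} (hab : a ≤ b) :
    1 / (Real.exp a + 1) - 1 / (Real.exp b + 1) ≤ (1 / (Real.exp a + 1)) * (b - a) := by
  have hA := Real.exp_pos a
  have hB := Real.exp_pos b
  have h1 : Real.exp (a - b) * Real.exp b = Real.exp a := by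
    rw [← Real.exp_add]; ring_nf
  have h2 : (a - b) + 1 ≤ Real.exp (a - b) := Real.add_one_le_exp _
  have key : Real.exp b - Real.exp a ≤ (b - a) * (Real.exp b + 1) := by
    nlinarith [mul_le_mul_of_nonneg_right h2 hB.le]
  have hA1 : (0:ℝ) < Real.exp a + 1 := by positivity
  have hB1 : (0:ℝ) < Real.exp b + 1 := by positivity
  rw [div_sub_div _ _ hA1.ne' hB1.ne', one_mul, mul_one, one_div,
    inv_mul_eq_div, div_le_div_iff₀ (by positivity) hA1]
  nlinarith [mul_le_mul_of_nonneg_right key hA1.le]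

/-- If `V_min ≤ V_max` are two bounded solutions of the Hartree–Fock fixed point
equation with the same chemical potential `μ`, then
`‖V_max - V_min‖_∞ ≤ β ‖w * g_max‖_∞ ‖V_max - V_min‖_∞`; in particular if
`β ‖w * g_max‖_∞ < 1` then `V_min = V_max`. -/
theorem Vmin_eq_Vmax_of_contraction
    (d : ℕ) (hd : 1 ≤ d) (β μ : ℝ) (hβ : 0 < β)
    (w : EuclideanSpace ℝ (Fin d) → ℝ)
    (hw_meas : Measurable w) (hw_nonneg : ∀ k, 0 ≤ w k) (hw_int : Integrable w)
    (Vmin Vmax : EuclideanSpace ℝ (Fin d) → ℝ)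
    (hVmin_bdd : MemLp Vmin ⊤ volume) (hVmax_bdd : MemLp Vmax ⊤ volume)
    (hle : ∀ k, 0 ≤ Vmin k ∧ Vmin k ≤ Vmax k)
    (hfixmin : ∀ k, Vmin k =
      ∫ k', w (k - k') / (Real.exp (β * (‖k'‖ ^ 2 / 2 - Vmin k' - μ)) + 1))
    (hfixmax : ∀ k, Vmax k =
      ∫ k', w (k - k') / (Real.exp (β * (‖k'‖ ^ 2 / 2 - Vmax k' - μ)) + 1))
    (gmax : EuclideanSpace ℝ (Fin d) → ℝ)
    (hgmax : ∀ k, gmax k = 1 / (Real.exp (β * (‖k‖ ^ 2 / 2 - Vmax k - μ)) + 1)) :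
    eLpNorm (Vmax - Vmin) ⊤ volume ≤
      ENNReal.ofReal β *
        eLpNorm (fun k => ∫ k', w (k - k') * gmax k') ⊤ volume *
        eLpNorm (Vmax - Vmin) ⊤ volume ∧
    (β * (eLpNorm (fun k => ∫ k', w (k - k') * gmax k') ⊤ volume).toReal < 1 →
      Vmin = Vmax) := by
  -- denominators are measurable-ish and ≥ 1
  have hsub : MemLp (Vmax - Vmin) ⊤ volume := hVmax_bdd.sub hVmin_bdd
  have hM_ne : eLpNorm (Vmax - Vmin) ⊤ volume ≠ ⊤ := hsub.2.ne
  set Mr : ℝ := (eLpNorm (Vmax - Vmin) ⊤ volume).toReal with hMr_def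
  have hMr0 : 0 ≤ Mr := ENNReal.toReal_nonneg
  -- aestrongly measurable denominators
  have hDm : ∀ (V : EuclideanSpace ℝ (Fin d) → ℝ), AEStronglyMeasurable V volume →
      AEStronglyMeasurable
        (fun k' => Real.exp (β * (‖k'‖ ^ 2 / 2 - V k' - μ)) + 1) volume := by
    intro V hV
    have h1 : AEMeasurable (fun k' : EuclideanSpace ℝ (Fin d) =>
        β * (‖k'‖ ^ 2 / 2 - V k' - μ)) volume :=
      ((((measurable_norm.pow_const 2).div_const 2).aemeasurable.sub
        hV.aemeasurable).sub aemeasurable_const).const_mul β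
    exact ((Real.measurable_exp.comp_aemeasurable h1).add_const 1).aestronglyMeasurable
  -- integrability of the fixed-point integrands
  have hint : ∀ (V : EuclideanSpace ℝ (Fin d) → ℝ), AEStronglyMeasurable V volume →
      ∀ k, Integrable
        (fun k' => w (k - k') / (Real.exp (β * (‖k'‖ ^ 2 / 2 - V k' - μ)) + 1)) volume := by
    intro V hV k
    apply Integrable.mono' (hw_int.comp_sub_left k)
    · exact ((hw_meas.comp (measurable_id.const_sub k)).aemeasurable.div
        (hDm V hV).aemeasurable).aestronglyMeasurable
    · refine ae_of_all _ fun k' => ?_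
      have hD1 : (1:ℝ) ≤ Real.exp (β * (‖k'‖ ^ 2 / 2 - V k' - μ)) + 1 := by
        nlinarith [Real.exp_pos (β * (‖k'‖ ^ 2 / 2 - V k' - μ))]
      rw [Real.norm_eq_abs, abs_of_nonneg (div_nonneg (hw_nonneg _) (by positivity))]
      exact div_le_self (hw_nonneg _) hD1
  have hintmin := hint Vmin hVmin_bdd.aestronglyMeasurable
  have hintmax := hint Vmax hVmax_bdd.aestronglyMeasurable
  have hg0 : ∀ k', 0 ≤ gmax k' := fun k' => by rw [hgmax]; exact occ_nonneg _
  have hg1 : ∀ k', gmax k' ≤ 1 := fun k' => by rw [hgmax]; exact occ_le_one _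
  -- integrability of the convolution integrand
  have hintg : ∀ k, Integrable (fun k' => w (k - k') * gmax k') volume := by
    intro k
    have he : (fun k' => w (k - k') * gmax k') = fun k' =>
        w (k - k') / (Real.exp (β * (‖k'‖ ^ 2 / 2 - Vmax k' - μ)) + 1) := by
      funext k'
      rw [hgmax, mul_one_div]
    rw [he]
    exact hintmax k
  set conv : EuclideanSpace ℝ (Fin d) → ℝ := fun k => ∫ k', w (k - k') * gmax k' with hconv_def
  have hconv_nonneg : ∀ k, 0 ≤ conv k := fun k =>
    integral_nonneg fun k' => mul_nonneg (hw_nonneg _) (hg0 _)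
  have hconv_le : ∀ k, conv k ≤ ∫ k', w k' := by
    intro k
    calc conv k ≤ ∫ k', w (k - k') :=
          integral_mono (hintg k) (hw_int.comp_sub_left k)
            (fun k' => mul_le_of_le_one_right (hw_nonneg _) (hg1 _))
      _ = ∫ k', w k' := integral_sub_left_eq_self w volume k
  have hN_ne : eLpNorm conv ⊤ volume ≠ ⊤ := by
    rw [eLpNorm_exponent_top]
    refine (eLpNormEssSup_le_of_ae_bound (C := ∫ k', w k') (ae_of_all _ fun k => ?_)).trans_lt
      ENNReal.ofReal_lt_top |>.ne
    rw [Real.norm_eq_abs, abs_of_nonneg (hconv_nonneg k)]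
    exact hconv_le k
  set Nr : ℝ := (eLpNorm conv ⊤ volume).toReal with hNr_def
  have hNr0 : 0 ≤ Nr := ENNReal.toReal_nonneg
  -- a.e. bounds by the essential sups
  have hae_bound : ∀ (f : EuclideanSpace ℝ (Fin d) → ℝ), eLpNorm f ⊤ volume ≠ ⊤ →
      ∀ᵐ k ∂volume, ‖f k‖ ≤ (eLpNorm f ⊤ volume).toReal := by
    intro f hf
    filter_upwards [ae_le_eLpNormEssSup (f := f) (μ := volume)] with k hk
    have h2 : ((‖f k‖₊ : ENNReal)).toReal ≤ (eLpNormEssSup f volume).toReal :=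
      ENNReal.toReal_mono (by rwa [← eLpNorm_exponent_top]) hk
    simpa [eLpNorm_exponent_top] using h2
  have hVd_ae : ∀ᵐ k' ∂volume, Vmax k' - Vmin k' ≤ Mr := by
    filter_upwards [hae_bound (Vmax - Vmin) hM_ne] with k' hk'
    have : Vmax k' - Vmin k' ≤ ‖(Vmax - Vmin) k'‖ := by
      rw [Pi.sub_apply]; exact le_abs_self _
    exact this.trans hk'
  have hN_ae : ∀ᵐ k ∂volume, conv k ≤ Nr := by
    filter_upwards [hae_bound conv hN_ne] with k hk
    exact ((le_abs_self _).trans (by rwa [← Real.norm_eq_abs]))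
  -- key pointwise estimate
  have key : ∀ k, Vmax k - Vmin k ≤ β * Mr * conv k := by
    intro k
    have e1 : Vmax k - Vmin k =
        ∫ k', (w (k - k') / (Real.exp (β * (‖k'‖ ^ 2 / 2 - Vmax k' - μ)) + 1)
          - w (k - k') / (Real.exp (β * (‖k'‖ ^ 2 / 2 - Vmin k' - μ)) + 1)) := by
      rw [hfixmax k, hfixmin k, ← integral_sub (hintmax k) (hintmin k)]
    rw [e1]
    have hi2 : Integrable (fun k' => β * Mr * (w (k - k') * gmax k')) volume :=
      (hintg k).const_mul _
    calc (∫ k', (w (k - k') / (Real.exp (β * (‖k'‖ ^ 2 / 2 - Vmax k' - μ)) + 1)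
          - w (k - k') / (Real.exp (β * (‖k'‖ ^ 2 / 2 - Vmin k' - μ)) + 1)))
        ≤ ∫ k', β * Mr * (w (k - k') * gmax k') := by
          apply integral_mono_ae ((hintmax k).sub (hintmin k)) hi2
          filter_upwards [hVd_ae] with k' hk'
          simp only [Pi.sub_apply]
          set a := β * (‖k'‖ ^ 2 / 2 - Vmax k' - μ) with ha_def
          set b := β * (‖k'‖ ^ 2 / 2 - Vmin k' - μ) with hb_def
          have hab : a ≤ b := by
            rw [ha_def, hb_def]
            exact mul_le_mul_of_nonneg_left (by linarith [(hle k').2]) hβ.le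
          have hba : b - a = β * (Vmax k' - Vmin k') := by rw [ha_def, hb_def]; ring
          have h3 : 1 / (Real.exp a + 1) - 1 / (Real.exp b + 1) ≤
              gmax k' * (β * (Vmax k' - Vmin k')) := by
            have := occ_diff_le hab
            rw [hba] at this
            rw [hgmax, ← ha_def]
            exact this
          have hw0 := hw_nonneg (k - k')
          have expand : w (k - k') / (Real.exp a + 1) - w (k - k') / (Real.exp b + 1)
              = w (k - k') * (1 / (Real.exp a + 1) - 1 / (Real.exp b + 1)) := by ring
          rw [expand]
          have h4 := mul_le_mul_of_nonneg_left h3 hw0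
          have h5 := mul_le_mul_of_nonneg_left hk'
            (mul_nonneg (mul_nonneg hw0 (hg0 k')) hβ.le)
          nlinarith [h4, h5]
      _ = β * Mr * conv k := integral_const_mul _ _
  -- essential sup bound
  have final_ae : ∀ᵐ k ∂volume, ‖(Vmax - Vmin) k‖ ≤ β * Mr * Nr := by
    filter_upwards [hN_ae] with k hk
    rw [Pi.sub_apply, Real.norm_eq_abs, abs_of_nonneg (by linarith [(hle k).2])]
    calc Vmax k - Vmin k ≤ β * Mr * conv k := key k
      _ ≤ β * Mr * Nr := mul_le_mul_of_nonneg_left hk (by positivity)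
  have part1 : eLpNorm (Vmax - Vmin) ⊤ volume ≤
      ENNReal.ofReal β * eLpNorm conv ⊤ volume * eLpNorm (Vmax - Vmin) ⊤ volume := by
    have h := eLpNormEssSup_le_of_ae_bound final_ae
    rw [← eLpNorm_exponent_top] at h
    refine h.trans (le_of_eq ?_)
    rw [show β * Mr * Nr = β * Nr * Mr by ring,
      ENNReal.ofReal_mul (mul_nonneg hβ.le hNr0), ENNReal.ofReal_mul hβ.le,
      hNr_def, hMr_def, ENNReal.ofReal_toReal hN_ne, ENNReal.ofReal_toReal hM_ne]
  refine ⟨part1, fun hlt => ?_⟩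
  have hM0 : eLpNorm (Vmax - Vmin) ⊤ volume = 0 := by
    by_contra h0
    have hc : ENNReal.ofReal β * eLpNorm conv ⊤ volume < 1 := by
      rw [← ENNReal.ofReal_toReal hN_ne, ← ENNReal.ofReal_mul hβ.le]
      exact ENNReal.ofReal_lt_one.2 hlt
    have hlt2 : eLpNorm (Vmax - Vmin) ⊤ volume < eLpNorm (Vmax - Vmin) ⊤ volume :=
      part1.trans_lt (by
        calc ENNReal.ofReal β * eLpNorm conv ⊤ volume * eLpNorm (Vmax - Vmin) ⊤ volume
            < 1 * eLpNorm (Vmax - Vmin) ⊤ volume :=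
              ENNReal.mul_lt_mul_left h0 hM_ne hc
          _ = eLpNorm (Vmax - Vmin) ⊤ volume := one_mul _)
    exact lt_irrefl _ hlt2
  have hae0 : Vmax - Vmin =ᵐ[volume] 0 :=
    (eLpNorm_eq_zero_iff hsub.aestronglyMeasurable (by simp)).1 hM0
  have hee : Vmin =ᵐ[volume] Vmax := by
    filter_upwards [hae0] with k hk
    have h : Vmax k - Vmin k = 0 := by simpa using hk
    linarith
  funext k
  rw [hfixmin k, hfixmax k]
  apply integral_congr_ae
  filter_upwards [hee] with k' hk'
  rw [hk']
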